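/- Let (R,m) be an F-finite reduced Noetherian local ring of prime characteristic p, let e ≥ 1 and q = p^e, and let φ : R → R be an additive map satisfying φ(r^q·x) = r·φ(x) for all r, x ∈ R (the twisted form of an R-linear map R^{1/q} → R). Suppose T is an ideal of R such that φ(T) ⊆ T, T ∩ R^o ≠ ∅, and T ⊆ J for every ideal J of R with φ(J) ⊆ J and J ∩ R^o ≠ ∅ (i.e., T = τ(R,φ) is the smallest φ-compatible ideal meeting R^o). Then T is a strong test ideal: T·(I*) = T·I for every ideal I of R. -/

import Mathlib

/-- The `q`-th Frobenius power `I^{[q]}` of an ideal `I`: the ideal generated by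
the `q`-th powers of the elements of `I`. -/
def frobeniusPower {R : Type*} [CommRing R] (I : Ideal R) (q : ℕ) : Ideal R :=
  Ideal.span ((fun a => a ^ q) '' (I : Set R))

/-- `Rreg c` means `c ∈ R^o`, i.e. `c` avoids every minimal prime of `R`. -/
def Rreg {R : Type*} [CommRing R] (c : R) : Prop :=
  ∀ P ∈ minimalPrimes R, c ∉ P

/-- `x` lies in the tight closure `I*` of `I` (characteristic `p`):
there is `c ∈ R^o` with `c * x^(p^e) ∈ I^{[p^e]}` for all `e ≫ 0`. -/
def InTightClosure {R : Type*} [CommRing R] (p : ℕ) (I : Ideal R) (x : R) : Prop :=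
  ∃ c, Rreg c ∧ ∃ N : ℕ, ∀ e ≥ N, c * x ^ p ^ e ∈ frobeniusPower I (p ^ e)

/-- The tight closure `I*` of `I`, as an ideal: the span of the set of elements in the
tight closure (this set is already an ideal, so taking the span is harmless). -/
def tightClosure {R : Type*} [CommRing R] (p : ℕ) (I : Ideal R) : Ideal R :=
  Ideal.span {x | InTightClosure p I x}

/-- A generator membership lemma for Frobenius powers. -/
lemma pow_mem_frobeniusPower {R : Type*} [CommRing R] (I : Ideal R) (Q : ℕ) {a : R}
    (ha : a ∈ I) : a ^ Q ∈ frobeniusPower I Q :=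
  Ideal.subset_span ⟨a, ha, rfl⟩

/-- Monotonicity: `I^{[p^M]} ⊆ I^{[p^m]}` for `m ≤ M`. -/
lemma frobeniusPower_antitone {R : Type*} [CommRing R] (I : Ideal R) {p : ℕ} (hp : 0 < p)
    {m M : ℕ} (h : m ≤ M) : frobeniusPower I (p ^ M) ≤ frobeniusPower I (p ^ m) := by
  rw [frobeniusPower, Ideal.span_le]
  rintro _ ⟨a, ha, rfl⟩
  simp only
  rw [show (a : R) ^ p ^ M = (a ^ p ^ (M - m)) ^ p ^ m by
    rw [← pow_mul, ← pow_add, Nat.sub_add_cancel h]]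
  exact pow_mem_frobeniusPower I (p ^ m) (I.pow_mem_of_mem ha _ (pow_pos hp _))

/-- In a reduced ring, every element of a minimal prime is killed by
an element outside that prime. -/
lemma exists_mul_eq_zero_of_mem_minimalPrime {R : Type*} [CommRing R] [IsReduced R]
    {P : Ideal R} (hP : P ∈ minimalPrimes R) {x : R} (hx : x ∈ P) :
    ∃ s ∉ P, s * x = 0 := by
  haveI hPp : P.IsPrime := hP.1.1
  have hnil : IsNilpotent (algebraMap R (Localization P.primeCompl) x) := by
    have h := IsLocalization.AtPrime.radical_map_of_mem_minimalPrimes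
      (A := Localization P.primeCompl) P ⊥ hP
    have hm : algebraMap R (Localization P.primeCompl) x ∈
        P.map (algebraMap R (Localization P.primeCompl)) := Ideal.mem_map_of_mem _ hx
    rw [← h, Ideal.map_bot] at hm
    obtain ⟨n, hn⟩ := hm
    exact ⟨n, by simpa using hn⟩
  obtain ⟨n, hn⟩ := hnil
  rw [← map_pow] at hn
  obtain ⟨m, hm⟩ := (IsLocalization.map_eq_zero_iff P.primeCompl
    (Localization P.primeCompl) (x ^ n)).1 hn
  rcases Nat.eq_zero_or_pos n with rfl | hn1
  · exfalso
    rw [pow_zero, mul_one] at hm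
    exact m.2 (hm ▸ P.zero_mem)
  · refine ⟨(m : R), m.2, ?_⟩
    have hkey : ((m : R) * x) ^ n = (m : R) ^ (n - 1) * ((m : R) * x ^ n) := by
      rw [mul_pow]
      rw [show (m : R) ^ n = (m : R) ^ (n - 1) * (m : R) by
        rw [← pow_succ, Nat.sub_add_cancel hn1]]
      ring
    exact IsNilpotent.eq_zero ⟨n, by rw [hkey, hm, mul_zero]⟩

/-- If `T = τ(R,φ)` is the smallest `φ`-compatible ideal meeting `R^o`
(for an `R`-linear map `φ : R^{1/q} → R`, viewed as an additive map with `φ(r^q x) = r φ(x)`),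
then `T` is a strong test ideal: `T · I* = T · I` for every ideal `I`. -/
theorem strong_test_ideal_of_phi {R : Type*} [CommRing R] [IsNoetherianRing R]
    [IsLocalRing R] [IsReduced R] (p : ℕ) [Fact p.Prime] [CharP R p]
    (hFF : (frobenius R p).Finite)
    (e q : ℕ) (he : 1 ≤ e) (hq : q = p ^ e)
    (φ : R →+ R) (hφ : ∀ r x : R, φ (r ^ q * x) = r * φ x)
    (T : Ideal R)
    (hTcomp : ∀ x ∈ T, φ x ∈ T)
    (hTreg : ∃ c ∈ T, Rreg c)
    (hTmin : ∀ J : Ideal R, (∀ x ∈ J, φ x ∈ J) → (∃ c ∈ J, Rreg c) → T ≤ J) :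
    ∀ I : Ideal R, T * tightClosure p I = T * I := by
  have hp : 0 < p := (Fact.out : p.Prime).pos
  obtain ⟨c₀, hc₀T, hc₀reg⟩ := hTreg
  -- iterated twisted linearity
  have iter_twist : ∀ (n : ℕ) (r y : R), (⇑φ)^[n] (r ^ q ^ n * y) = r * (⇑φ)^[n] y := by
    intro n
    induction n with
    | zero => intro r y; simp
    | succ n ih =>
      intro r y
      have h1 : r ^ q ^ (n + 1) = (r ^ q) ^ q ^ n := by
        rw [← pow_mul, ← pow_succ']
      simp only [Function.iterate_succ_apply']
      rw [h1, ih, hφ]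
  have iter_T : ∀ (n : ℕ), ∀ t ∈ T, (⇑φ)^[n] t ∈ T := by
    intro n
    induction n with
    | zero => intro t ht; simpa using ht
    | succ n ih =>
      intro t ht
      rw [Function.iterate_succ_apply']
      exact hTcomp _ (ih t ht)
  -- Lemma A : φ^[n] maps (c₀)·I^{[qⁿ]} into T·I
  have lemA : ∀ (I : Ideal R) (n : ℕ) (z : R),
      z ∈ Ideal.span {c₀} * frobeniusPower I (q ^ n) → (⇑φ)^[n] z ∈ T * I := by
    intro I n z hz
    have key : ∀ s : R, (⇑φ)^[n] (s * z) ∈ T * I := by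
      refine Submodule.mul_induction_on hz ?_ ?_
      · intro m hm w hw
        obtain ⟨u, hu⟩ := Ideal.mem_span_singleton'.1 hm
        rw [frobeniusPower] at hw
        induction hw using Submodule.span_induction with
        | mem w hwS =>
          obtain ⟨a, haI, rfl⟩ := hwS
          intro s
          rw [show s * (m * a ^ q ^ n) = a ^ q ^ n * (s * u * c₀) by rw [← hu]; ring,
            iter_twist, mul_comm a]
          exact Ideal.mul_mem_mul (iter_T n _ (T.mul_mem_left (s * u) hc₀T)) haI
        | zero =>
          intro s
          rw [mul_zero, mul_zero, iterate_map_zero]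
          exact zero_mem _
        | add w₁ w₂ hw₁ hw₂ ih₁ ih₂ =>
          intro s
          rw [mul_add, mul_add, iterate_map_add]
          exact add_mem (ih₁ s) (ih₂ s)
        | smul v w hwmem ih =>
          intro s
          rw [smul_eq_mul, show s * (m * (v * w)) = (s * v) * (m * w) by ring]
          exact ih (s * v)
      · intro z₁ z₂ h₁ h₂ s
        rw [mul_add, iterate_map_add]
        exact add_mem (h₁ s) (h₂ s)
    simpa using key 1
  intro I
  refine le_antisymm ?_ ?_
  · -- hard direction : T * I* ≤ T * I
    refine Ideal.mul_le.2 fun c hc y hy => ?_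
    rw [tightClosure] at hy
    induction hy using Submodule.span_induction with
    | zero => rw [mul_zero]; exact zero_mem _
    | add y₁ y₂ hy₁ hy₂ ih₁ ih₂ => rw [mul_add]; exact add_mem ih₁ ih₂
    | smul v y hymem ih =>
      rw [smul_eq_mul, mul_left_comm]
      exact Ideal.mul_mem_left _ v ih
    | mem x hx =>
      obtain ⟨d, hdreg, N, hN⟩ := hx
      have hq0 : 0 < q := hq ▸ pow_pos hp e
      have hq1 : ∀ n : ℕ, 0 < q ^ n := fun n => pow_pos hq0 n
      have hqn : ∀ n : ℕ, q ^ n = p ^ (e * n) := fun n => by rw [hq, ← pow_mul]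
      -- the ideal of "uniform multipliers"
      obtain ⟨A, memA⟩ : ∃ A : Ideal R, ∀ a : R, a ∈ A ↔
          ∀ n : ℕ, a * x ^ q ^ n ∈ Ideal.span {c₀} * frobeniusPower I (q ^ n) :=
        ⟨⨅ n : ℕ, (Ideal.span {c₀} * frobeniusPower I (q ^ n)).colon
            (Ideal.span {x ^ q ^ n}), fun a => by
          simp only [Submodule.mem_iInf, Ideal.mem_colon_span_singleton]⟩
      -- it is not contained in any minimal prime
      have hAP : ∀ P ∈ minimalPrimes R,
          ∃ a, (∀ n : ℕ, a * x ^ q ^ n ∈ Ideal.span {c₀} * frobeniusPower I (q ^ n)) ∧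
            a ∉ P := by
        intro P hP
        haveI hPp : P.IsPrime := hP.1.1
        by_cases hxP : x ∈ P
        · obtain ⟨s, hsP, hs0⟩ := exists_mul_eq_zero_of_mem_minimalPrime hP hxP
          refine ⟨c₀ * s, fun n => ?_, fun hmem => ?_⟩
          · rw [show c₀ * s * x ^ q ^ n = c₀ * x ^ (q ^ n - 1) * (s * x) by
              rw [show x ^ q ^ n = x ^ (q ^ n - 1) * x by
                rw [← pow_succ, Nat.sub_add_cancel (hq1 n)]]; ring,
              hs0, mul_zero]
            exact zero_mem _
          · rcases hPp.mem_or_mem hmem with h | h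
            exacts [hc₀reg P hP h, hsP h]
        · refine ⟨c₀ * (d * x ^ p ^ N), fun n => ?_, fun hmem => ?_⟩
          · have hmemF : d * x ^ p ^ N * x ^ q ^ n ∈ frobeniusPower I (q ^ n) := by
              rw [hqn n]
              rcases le_total (e * n) N with h | h
              · exact Ideal.mul_mem_right _ _
                  (frobeniusPower_antitone I hp h (hN N le_rfl))
              · rw [show d * x ^ p ^ N * x ^ p ^ (e * n) =
                  x ^ p ^ N * (d * x ^ p ^ (e * n)) by ring]
                exact Ideal.mul_mem_left _ _ (hN (e * n) h)
            rw [show c₀ * (d * x ^ p ^ N) * x ^ q ^ n =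
              c₀ * (d * x ^ p ^ N * x ^ q ^ n) by ring]
            exact Ideal.mul_mem_mul (Ideal.mem_span_singleton_self c₀) hmemF
          · rcases hPp.mem_or_mem hmem with h | h
            · exact hc₀reg P hP h
            · rcases hPp.mem_or_mem h with h' | h'
              · exact hdreg P hP h'
              · exact hxP (hPp.mem_of_pow_mem _ h')
      -- prime avoidance produces a uniform multiplier in R^o
      have hg : ∃ g, (∀ n : ℕ, g * x ^ q ^ n ∈ Ideal.span {c₀} * frobeniusPower I (q ^ n)) ∧
          Rreg g := by
        by_contra hcon
        push_neg at hcon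
        have hfin := minimalPrimes.finite_of_isNoetherianRing R
        have hsub : (A : Set R) ⊆
            ⋃ P ∈ (hfin.toFinset : Set (Ideal R)), (P : Set R) := by
          intro a ha
          have hnreg := hcon a ((memA a).1 ha)
          unfold Rreg at hnreg
          push_neg at hnreg
          obtain ⟨P, hPmin, haP⟩ := hnreg
          exact Set.mem_biUnion (hfin.mem_toFinset.2 hPmin) haP
        obtain ⟨P, hPs, hle⟩ := (Ideal.subset_union_prime (f := fun P : Ideal R => P)
          (⊥ : Ideal R) ⊥ (fun Pi hPi _ _ => (hfin.mem_toFinset.1 hPi).1.1)).1 hsub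
        obtain ⟨a, haA, haP⟩ := hAP P (hfin.mem_toFinset.1 hPs)
        exact haP (hle ((memA a).2 haA))
      obtain ⟨g, hgA, hgreg⟩ := hg
      -- the φ-compatible ideal generated by g
      set S : Set R := {y | ∃ (n : ℕ) (r : R), (⇑φ)^[n] (r * g) = y} with hS
      have hgJ : g ∈ Ideal.span S := Ideal.subset_span ⟨0, 1, by simp⟩
      have hJcomp : ∀ z ∈ Ideal.span S, φ z ∈ Ideal.span S := by
        have key : ∀ z ∈ Ideal.span S, ∀ s : R, φ (s * z) ∈ Ideal.span S := by
          intro z hz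
          induction hz using Submodule.span_induction with
          | mem w hw =>
            obtain ⟨n, r, rfl⟩ := hw
            intro s
            rw [← iter_twist n s (r * g), ← Function.iterate_succ_apply' (⇑φ) n]
            exact Ideal.subset_span ⟨n + 1, s ^ q ^ n * r, by rw [mul_assoc]⟩
          | zero => intro s; rw [mul_zero, map_zero]; exact zero_mem _
          | add a b ha hb iha ihb =>
            intro s; rw [mul_add, map_add]; exact add_mem (iha s) (ihb s)
          | smul v w hwmem ih =>
            intro s
            rw [smul_eq_mul, show s * (v * w) = (s * v) * w by ring]
            exact ih (s * v)
        intro z hz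
        simpa using key z hz 1
      have hTJ : T ≤ Ideal.span S := hTmin _ hJcomp ⟨g, hgJ, hgreg⟩
      -- final computation
      have hfinal : ∀ z ∈ Ideal.span S, ∀ s : R, s * z * x ∈ T * I := by
        intro z hz
        induction hz using Submodule.span_induction with
        | mem w hw =>
          obtain ⟨n, r, rfl⟩ := hw
          intro s
          have e1 : s * (⇑φ)^[n] (r * g) * x =
              (⇑φ)^[n] ((s ^ q ^ n * r) * (g * x ^ q ^ n)) := by
            rw [show (s ^ q ^ n * r) * (g * x ^ q ^ n) =
              x ^ q ^ n * (s ^ q ^ n * (r * g)) by ring,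
              iter_twist n x _, iter_twist n s (r * g)]
            ring
          rw [e1]
          exact lemA I n _ (Ideal.mul_mem_left _ _ (hgA n))
        | zero => intro s; rw [mul_zero, zero_mul]; exact zero_mem _
        | add a b ha hb iha ihb =>
          intro s; rw [mul_add, add_mul]; exact add_mem (iha s) (ihb s)
        | smul v w hwmem ih =>
          intro s
          rw [smul_eq_mul, show s * (v * w) * x = (s * v) * w * x by ring]
          exact ih (s * v)
      have hres := hfinal c (hTJ hc) 1
      rw [one_mul] at hres
      exact hres
  · -- easy direction : T * I ≤ T * I*
    refine Ideal.mul_mono_right fun x hx => ?_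
    exact Ideal.subset_span ⟨c₀, hc₀reg, 0, fun m _ =>
      Ideal.mul_mem_left _ c₀ (pow_mem_frobeniusPower I (p ^ m) hx)⟩
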